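/- Let ρ ∈ (0, 1), γ > 0, and α₁, α₂, α₃, α₄ > 0, define G_ρ(z) = 1 − (ρ√(1−z) − √((1−ρ²)z))² for z ∈ [0, 1], and define f(z) = 1/(γ α₁ z + α₂) − 1/(γ α₃ G_ρ(z) + α₄) for z ∈ (0, 1). If z′ ∈ (0, 1) satisfies f′(z′) = 0 and γ α₁ z′ + α₂ < γ α₃ G_ρ(z′) + α₄, then f″(z′) < 0. -/

import Mathlib

set_option maxHeartbeats 1000000

noncomputable def wf (ρ z : ℝ) : ℝ := ρ * Real.sqrt (1 - z) - Real.sqrt ((1 - ρ ^ 2) * z)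
noncomputable def w1f (ρ z : ℝ) : ℝ :=
  -ρ / (2 * Real.sqrt (1 - z)) - (1 - ρ ^ 2) / (2 * Real.sqrt ((1 - ρ ^ 2) * z))
noncomputable def w2f (ρ z : ℝ) : ℝ :=
  -ρ / (4 * (1 - z) * Real.sqrt (1 - z))
    + (1 - ρ ^ 2) ^ 2 / (4 * ((1 - ρ ^ 2) * z) * Real.sqrt ((1 - ρ ^ 2) * z))
noncomputable def Bf (ρ c α₄ z : ℝ) : ℝ := c * (1 - wf ρ z ^ 2) + α₄
noncomputable def f1f (ρ a α₂ c α₄ z : ℝ) : ℝ :=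
  (-a) / (a * z + α₂) ^ 2 + (c * (-2 * wf ρ z * w1f ρ z)) / (Bf ρ c α₄ z) ^ 2

lemma sqrt1z_deriv {z : ℝ} (h1 : z < 1) :
    HasDerivAt (fun z => Real.sqrt (1 - z)) (-1 / (2 * Real.sqrt (1 - z))) z := by
  have h := (Real.hasDerivAt_sqrt (x := 1 - z) (by linarith)).comp z
    ((hasDerivAt_const z (1:ℝ)).sub (hasDerivAt_id z))
  refine h.congr_deriv ?_
  simp
  ring

lemma sqrtcz_deriv {c z : ℝ} (hc : 0 < c) (hz : 0 < z) :
    HasDerivAt (fun z => Real.sqrt (c * z)) (c / (2 * Real.sqrt (c * z))) z := by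
  have h := (Real.hasDerivAt_sqrt (x := c * z) (by positivity)).comp z
    ((hasDerivAt_id z).const_mul c)
  refine h.congr_deriv ?_
  ring

lemma wf_deriv {ρ z : ℝ} (hρ0 : 0 < ρ) (hρ1 : ρ < 1) (hz0 : 0 < z) (hz1 : z < 1) :
    HasDerivAt (wf ρ) (w1f ρ z) z := by
  have hρ2 : (0:ℝ) < 1 - ρ ^ 2 := by nlinarith
  have h := ((sqrt1z_deriv hz1).const_mul ρ).sub (sqrtcz_deriv hρ2 hz0)
  refine h.congr_deriv ?_
  unfold w1f
  ring

lemma w1f_deriv {ρ z : ℝ} (hρ0 : 0 < ρ) (hρ1 : ρ < 1) (hz0 : 0 < z) (hz1 : z < 1) :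
    HasDerivAt (w1f ρ) (w2f ρ z) z := by
  have hρ2 : (0:ℝ) < 1 - ρ ^ 2 := by nlinarith
  have hp : 0 < Real.sqrt (1 - z) := Real.sqrt_pos.mpr (by linarith)
  have hs : 0 < Real.sqrt ((1 - ρ ^ 2) * z) := Real.sqrt_pos.mpr (by positivity)
  have hp2 : Real.sqrt (1 - z) ^ 2 = 1 - z := Real.sq_sqrt (by linarith)
  have hs2 : Real.sqrt ((1 - ρ ^ 2) * z) ^ 2 = (1 - ρ ^ 2) * z := Real.sq_sqrt (by positivity)
  have h1 := (hasDerivAt_const z (-ρ)).div ((sqrt1z_deriv hz1).const_mul 2) (by positivity)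
  have h2 := (hasDerivAt_const z (1 - ρ ^ 2)).div ((sqrtcz_deriv hρ2 hz0).const_mul 2) (by positivity)
  have h := h1.sub h2
  refine h.congr_deriv ?_
  unfold w2f
  set p := Real.sqrt (1 - z) with hp'
  set s := Real.sqrt ((1 - ρ ^ 2) * z) with hs'
  rw [← hp2, ← hs2]
  field_simp
  ring

lemma wf_sq_le {ρ z : ℝ} (hρ0 : 0 < ρ) (hρ1 : ρ < 1) (hz0 : 0 < z) (hz1 : z < 1) :
    wf ρ z ^ 2 ≤ 1 := by
  have hρ2 : (0:ℝ) < 1 - ρ ^ 2 := by nlinarith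
  unfold wf
  rw [Real.sqrt_mul hρ2.le]
  set p := Real.sqrt (1 - z) with hp'
  set q := Real.sqrt z with hq'
  set r := Real.sqrt (1 - ρ ^ 2) with hr'
  have hp2 : p ^ 2 = 1 - z := Real.sq_sqrt (by linarith)
  have hq2 : q ^ 2 = z := Real.sq_sqrt hz0.le
  have hr2 : r ^ 2 = 1 - ρ ^ 2 := Real.sq_sqrt hρ2.le
  nlinarith [sq_nonneg (ρ * q + r * p)]

lemma key_pos {ρ z : ℝ} (hρ0 : 0 < ρ) (hρ1 : ρ < 1) (hz0 : 0 < z) (hz1 : z < 1) :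
    0 < w1f ρ z ^ 2 + wf ρ z * w2f ρ z := by
  have hρ2 : (0:ℝ) < 1 - ρ ^ 2 := by nlinarith
  unfold wf w1f w2f
  rw [Real.sqrt_mul hρ2.le]
  set p := Real.sqrt (1 - z) with hp'
  set q := Real.sqrt z with hq'
  set r := Real.sqrt (1 - ρ ^ 2) with hr'
  have hp : 0 < p := Real.sqrt_pos.mpr (by linarith)
  have hq : 0 < q := Real.sqrt_pos.mpr hz0
  have hr : 0 < r := Real.sqrt_pos.mpr hρ2
  have hp2 : p ^ 2 = 1 - z := Real.sq_sqrt (by linarith)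
  have hq2 : q ^ 2 = z := Real.sq_sqrt hz0.le
  have hr2 : r ^ 2 = 1 - ρ ^ 2 := Real.sq_sqrt hρ2.le
  have hid : (-ρ / (2 * p) - (1 - ρ ^ 2) / (2 * (r * q))) ^ 2
      + (ρ * p - r * q) * (-ρ / (4 * (1 - z) * p) + (1 - ρ ^ 2) ^ 2 / (4 * ((1 - ρ ^ 2) * z) * (r * q)))
      = ρ * r * (p ^ 2 + q ^ 2) ^ 2 / (4 * p ^ 3 * q ^ 3) := by
    rw [← hp2, ← hq2, ← hr2]
    field_simp
    ring
  rw [hid]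
  positivity

/-- The reciprocal-source-power function
`f(z) = 1/(γα₁z + α₂) − 1/(γα₃G_ρ(z) + α₄)` of the cooperative-jamming total-power
minimization is strictly concave at any stationary point `z′ ∈ (0,1)` at which it is
positive (`γα₁z′ + α₂ < γα₃G_ρ(z′) + α₄`). -/
theorem stmt19 (ρ γ α₁ α₂ α₃ α₄ : ℝ) (hρ0 : 0 < ρ) (hρ1 : ρ < 1) (hγ : 0 < γ)
    (hα₁ : 0 < α₁) (hα₂ : 0 < α₂) (hα₃ : 0 < α₃) (hα₄ : 0 < α₄)
    (G f : ℝ → ℝ)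
    (hG : ∀ z, G z = 1 - (ρ * Real.sqrt (1 - z) - Real.sqrt ((1 - ρ ^ 2) * z)) ^ 2)
    (hf : ∀ z, f z = 1 / (γ * α₁ * z + α₂) - 1 / (γ * α₃ * G z + α₄))
    (z' : ℝ) (hz' : z' ∈ Set.Ioo (0 : ℝ) 1)
    (hstat : deriv f z' = 0)
    (hlt : γ * α₁ * z' + α₂ < γ * α₃ * G z' + α₄) :
    deriv (deriv f) z' < 0 := by
  obtain ⟨hz0, hz1⟩ := hz'
  have hρ2 : (0:ℝ) < 1 - ρ ^ 2 := by nlinarith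
  set a := γ * α₁ with ha
  set c := γ * α₃ with hc
  have hapos : 0 < a := mul_pos hγ hα₁
  have hcpos : 0 < c := mul_pos hγ hα₃
  have hGw : ∀ z, G z = 1 - wf ρ z ^ 2 := fun z => by rw [hG z]; rfl
  have hfe : f = fun z => (a * z + α₂)⁻¹ - (Bf ρ c α₄ z)⁻¹ := by
    funext z
    rw [hf z, hGw z]
    simp [Bf, one_div]
  have hBpos : ∀ y ∈ Set.Ioo (0:ℝ) 1, 0 < Bf ρ c α₄ y := by
    intro y hy
    have h := wf_sq_le hρ0 hρ1 hy.1 hy.2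
    unfold Bf
    nlinarith
  have hApos : ∀ y ∈ Set.Ioo (0:ℝ) 1, 0 < a * y + α₂ := by
    intro y hy
    have := hy.1
    positivity
  have hAd : ∀ y : ℝ, HasDerivAt (fun z => a * z + α₂) a y := by
    intro y
    simpa using ((hasDerivAt_id y).const_mul a).add_const α₂
  have hBd : ∀ y ∈ Set.Ioo (0:ℝ) 1,
      HasDerivAt (Bf ρ c α₄) (c * (-2 * wf ρ y * w1f ρ y)) y := by
    intro y hy
    have hw := wf_deriv hρ0 hρ1 hy.1 hy.2
    have h := (((hw.pow 2).const_sub 1).const_mul c).add_const α₄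
    have he : c * -((2:ℕ) * wf ρ y ^ (2-1) * w1f ρ y) = c * (-2 * wf ρ y * w1f ρ y) := by
      push_cast; ring
    exact he ▸ h
  have hfderiv : ∀ y ∈ Set.Ioo (0:ℝ) 1, HasDerivAt f (f1f ρ a α₂ c α₄ y) y := by
    intro y hy
    have hA := hAd y
    have hB := hBd y hy
    have h := (hA.inv (hApos y hy).ne').sub (hB.inv (hBpos y hy).ne')
    rw [hfe]
    refine h.congr_deriv ?_
    unfold f1f
    ring
  have hstat' : f1f ρ a α₂ c α₄ z' = 0 := by
    rw [← (hfderiv z' ⟨hz0, hz1⟩).deriv]; exact hstat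
  have hev : deriv f =ᶠ[nhds z'] f1f ρ a α₂ c α₄ := by
    filter_upwards [Ioo_mem_nhds hz0 hz1] with y hy
    exact (hfderiv y hy).deriv
  rw [hev.deriv_eq]
  -- second derivative
  have hw := wf_deriv hρ0 hρ1 hz0 hz1
  have hw1 := w1f_deriv hρ0 hρ1 hz0 hz1
  have hA := hAd z'
  have hA0 := hApos z' ⟨hz0, hz1⟩
  have hB0 := hBpos z' ⟨hz0, hz1⟩
  have hA2 := hA.pow 2
  have hB := hBd z' ⟨hz0, hz1⟩
  have hB2 := hB.pow 2
  have t1 := (hasDerivAt_const z' (-a)).div hA2 (pow_ne_zero 2 hA0.ne')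
  have hg1 := (hw.const_mul (-2)).mul hw1
  have hnum := hg1.const_mul c
  have t2 := hnum.div hB2 (pow_ne_zero 2 hB0.ne')
  have total : HasDerivAt (f1f ρ a α₂ c α₄) _ z' := t1.add t2
  rw [total.deriv]
  -- now prove the explicit value is negative
  set A := a * z' + α₂ with hAv
  set Bv := Bf ρ c α₄ z' with hBv
  set W := wf ρ z' with hW
  set W1 := w1f ρ z' with hW1
  set W2 := w2f ρ z' with hW2
  set g1 := -2 * W * W1 with hg1v
  have hK : 0 < W1 ^ 2 + W * W2 := key_pos hρ0 hρ1 hz0 hz1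
  have hAB : A < Bv := by
    rw [hGw z'] at hlt
    simpa [hBv, Bf, hAv] using hlt
  have hkey : a * Bv ^ 2 = c * g1 * A ^ 2 := by
    unfold f1f at hstat'
    rw [← hAv, ← hBv, ← hW, ← hW1] at hstat'
    field_simp at hstat'
    rw [hg1v]
    linear_combination -hstat' 
  have hkey2 : a ^ 2 * Bv ^ 4 = c ^ 2 * g1 ^ 2 * A ^ 4 := by
    rw [show a ^ 2 * Bv ^ 4 = (a * Bv ^ 2) ^ 2 by ring,
        show c ^ 2 * g1 ^ 2 * A ^ 4 = (c * g1 * A ^ 2) ^ 2 by ring, hkey]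
  have hD : (0 * (a * z' + α₂) ^ 2 - -a * ((2:ℕ) * (a * z' + α₂) ^ (2-1) * a)) / ((a * z' + α₂) ^ 2) ^ 2
      + ((c * (-2 * W1 * W1 + -2 * W * W2)) * Bv ^ 2
          - (c * (-2 * W * W1)) * ((2:ℕ) * Bv ^ (2-1) * (c * (-2 * W * W1)))) / (Bv ^ 2) ^ 2
      = 2 * a ^ 2 / A ^ 3 + c * (-2 * (W1 ^ 2 + W * W2)) / Bv ^ 2 - 2 * c ^ 2 * g1 ^ 2 / Bv ^ 3 := by
    rw [← hAv]
    field_simp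
    ring
  refine lt_of_eq_of_lt hD ?_
  clear_value A Bv W W1 W2 g1
  clear total t1 t2 hnum hg1 hB2 hA2 hB hA hw hw1 hev hfderiv hfe hBd hAd hstat hstat' hf hG hGw hBpos hApos hD
  have hprod : (2 * a ^ 2 / A ^ 3 + c * (-2 * (W1 ^ 2 + W * W2)) / Bv ^ 2
      - 2 * c ^ 2 * g1 ^ 2 / Bv ^ 3) * (A ^ 3 * Bv ^ 4)
      = 2 * a ^ 2 * Bv ^ 4 + c * (-2 * (W1 ^ 2 + W * W2)) * A ^ 3 * Bv ^ 2
        - 2 * c ^ 2 * g1 ^ 2 * A ^ 3 * Bv := by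
    field_simp
  have hpos : 0 < A ^ 3 * Bv ^ 4 := mul_pos (pow_pos hA0 3) (pow_pos hB0 4)
  have hneg : 2 * a ^ 2 * Bv ^ 4 + c * (-2 * (W1 ^ 2 + W * W2)) * A ^ 3 * Bv ^ 2
      - 2 * c ^ 2 * g1 ^ 2 * A ^ 3 * Bv < 0 := by
    nlinarith [hkey2,
      mul_nonneg (mul_nonneg (sq_nonneg (c * g1)) (pow_pos hA0 3).le) (sub_nonneg.mpr hAB.le),
      mul_pos (mul_pos (mul_pos hcpos hK) (pow_pos hA0 3)) (pow_pos hB0 2)]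
  by_contra hcon
  push_neg at hcon
  have hx := mul_nonneg hcon hpos.le
  rw [hprod] at hx
  linarith
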